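/- For every finite simple graph G, |corona(G)| + |core(G)| ≤ 2·α(G) + k, where k is the maximum cardinality of a set of pairwise vertex-distinct odd cycles of G. -/

import Mathlib

variable {V : Type*} [Fintype V] [DecidableEq V]

/-- `S` is an independent set of `G`. -/
def IsIndep (G : SimpleGraph V) (S : Set V) : Prop :=
  ∀ ⦃u⦄, u ∈ S → ∀ ⦃v⦄, v ∈ S → ¬ G.Adj u v

/-- The independence number `α(G)`: the maximum cardinality of an independent set. -/
noncomputable def indepNum (G : SimpleGraph V) : ℕ :=
  sSup {n : ℕ | ∃ S : Set V, IsIndep G S ∧ S.ncard = n}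

/-- `S` is a maximum independent set of `G`. -/
def IsMaxIndep (G : SimpleGraph V) (S : Set V) : Prop :=
  IsIndep G S ∧ ∀ T : Set V, IsIndep G T → T.ncard ≤ S.ncard

/-- The neighborhood `N(X)` of a set of vertices `X`. -/
def nbhdSet (G : SimpleGraph V) (X : Set V) : Set V :=
  {v | ∃ u ∈ X, G.Adj u v}

/-- The difference `d_G(X) = |X| - |N(X)|` of a vertex set `X`. -/
noncomputable def diffSet (G : SimpleGraph V) (X : Set V) : ℤ :=
  (X.ncard : ℤ) - ((nbhdSet G X).ncard : ℤ)

/-- `I` is a critical independent set of `G`. -/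
def IsCriticalIndep (G : SimpleGraph V) (I : Set V) : Prop :=
  IsIndep G I ∧ ∀ J : Set V, IsIndep G J → diffSet G J ≤ diffSet G I

/-- `I` is a maximum-cardinality critical independent set of `G`. -/
def IsMaxCriticalIndep (G : SimpleGraph V) (I : Set V) : Prop :=
  IsCriticalIndep G I ∧ ∀ J : Set V, IsCriticalIndep G J → J.ncard ≤ I.ncard

/-- `core(G)`: the intersection of all maximum independent sets of `G`. -/
def coreSet (G : SimpleGraph V) : Set V := ⋂₀ {S : Set V | IsMaxIndep G S}

/-- `corona(G)`: the union of all maximum independent sets of `G`. -/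
def coronaSet (G : SimpleGraph V) : Set V := ⋃₀ {S : Set V | IsMaxIndep G S}

/-- `ker(G)`: the intersection of all critical independent sets of `G`. -/
def kerSet (G : SimpleGraph V) : Set V := ⋂₀ {S : Set V | IsCriticalIndep G S}

/-- `diadem(G)`: the union of all critical independent sets of `G`. -/
def diademSet (G : SimpleGraph V) : Set V := ⋃₀ {S : Set V | IsCriticalIndep G S}

/-- `nucleus(G)`: the intersection of all maximum-cardinality critical independent
sets of `G`. -/
def nucleusSet (G : SimpleGraph V) : Set V := ⋂₀ {S : Set V | IsMaxCriticalIndep G S}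

/-- `C` is the vertex set of some odd cycle of `G`. -/
def IsOddCycleVertexSet (G : SimpleGraph V) (C : Set V) : Prop :=
  ∃ (v : V) (w : G.Walk v v), w.IsCycle ∧ Odd w.length ∧ {x | x ∈ w.support} = C

/-- The maximum cardinality of a set of pairwise vertex-distinct odd cycles of `G`,
i.e. the number of distinct vertex sets of odd cycles of `G`. -/
noncomputable def numVertexDistinctOddCycles (G : SimpleGraph V) : ℕ :=
  {C : Set V | IsOddCycleVertexSet G C}.ncard

/-- `E` is the edge set of some odd cycle of `G`. -/
def IsOddCycleEdgeSet (G : SimpleGraph V) (E : Set (Sym2 V)) : Prop :=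
  ∃ (v : V) (w : G.Walk v v), w.IsCycle ∧ Odd w.length ∧ {e | e ∈ w.edges} = E

/-- The number of (distinct) odd cycles of `G`, where a cycle is identified with
its edge set. -/
noncomputable def numOddCycles (G : SimpleGraph V) : ℕ :=
  {E : Set (Sym2 V) | IsOddCycleEdgeSet G E}.ncard

set_option linter.unusedSectionVars false

open SimpleGraph

/-- From an odd closed walk one can extract an odd cycle. -/
lemma exists_odd_cycle_of_odd_closed_walk {W : Type*} [DecidableEq W] {G : SimpleGraph W} :
    ∀ (n : ℕ) {v : W} (w : G.Walk v v), w.length = n → Odd n →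
      ∃ (u : W) (c : G.Walk u u), c.IsCycle ∧ Odd c.length := by
  intro n
  induction n using Nat.strong_induction_on with
  | _ n ih =>
    intro v w hlen hodd
    by_cases hnd : w.support.tail.Nodup
    · -- `w` is itself a cycle
      have hnil : ¬ w.Nil := by
        rw [Walk.not_nil_iff_lt_length, hlen]
        rcases hodd with ⟨k, hk⟩; omega
      obtain ⟨y, h, q, rfl⟩ := Walk.not_nil_iff.mp hnil
      have hq : q.support.Nodup := by simpa using hnd
      refine ⟨v, Walk.cons h q, (Walk.cons_isCycle_iff q h).mpr ⟨Walk.IsPath.mk' hq, ?_⟩,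
        hlen ▸ hodd⟩
      intro hmem
      cases q with
      | nil => simp at hmem
      | cons h' q' =>
        rw [Walk.edges_cons, List.mem_cons] at hmem
        rcases hmem with heq | hmem'
        · rw [Sym2.eq_iff] at heq
          rcases heq with ⟨hvy, -⟩ | ⟨hvz, -⟩
          · exact h.ne hvy
          · subst hvz
            have hq' : q'.support.Nodup := by
              rw [Walk.support_cons, List.nodup_cons] at hq
              exact hq.2
            have : q' = Walk.nil := Walk.isPath_iff_eq_nil.mp (Walk.IsPath.mk' hq')
            subst this
            simp only [Walk.length_cons, Walk.length_nil] at hlen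
            rcases hodd with ⟨k, hk⟩; omega
        · have hy : y ∈ q'.support := Walk.snd_mem_support_of_mem_edges q' hmem'
          rw [Walk.support_cons, List.nodup_cons] at hq
          exact hq.1 hy
    · -- there is a repeated vertex: split the walk
      obtain ⟨x, hx⟩ := List.exists_duplicate_iff_not_nodup.mpr hnd
      have hcnt : 2 ≤ w.support.tail.count x := List.duplicate_iff_two_le_count.mp hx
      have hxs : x ∈ w.support := List.mem_of_mem_tail hx.mem
      have hcnt' : 2 ≤ (w.rotate x hxs).support.tail.count x := by
        rw [(Walk.support_rotate w x hxs).perm.count_eq]; exact hcnt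
      have hlenrot : (w.rotate x hxs).length = n := by
        have h1 := congrArg Walk.length (w.take_spec hxs)
        rw [Walk.length_append] at h1
        rw [hlen] at h1
        have h2 : (w.rotate x hxs).length
            = (w.dropUntil x hxs).length + (w.takeUntil x hxs).length := by
          unfold Walk.rotate
          exact Walk.length_append _ _
        omega
      have hnil : ¬ (w.rotate x hxs).Nil := by
        rw [Walk.not_nil_iff_lt_length, hlenrot]
        rcases hodd with ⟨k, hk⟩; omega
      obtain ⟨y, hadj, q, hwq⟩ := Walk.not_nil_iff.mp hnil
      rw [hwq] at hcnt' hlenrot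
      rw [Walk.support_cons, List.tail_cons] at hcnt'
      rw [Walk.length_cons] at hlenrot
      have hxq : x ∈ q.support := by
        rw [← List.count_pos_iff]
        omega
      have hspec := q.take_spec hxq
      have hlens : (q.takeUntil x hxq).length + (q.dropUntil x hxq).length = q.length := by
        have := congrArg Walk.length hspec
        rwa [Walk.length_append] at this
      have hsupp : q.support = (q.takeUntil x hxq).support ++ (q.dropUntil x hxq).support.tail := by
        conv_lhs => rw [← hspec]
        exact Walk.support_append _ _
      have hcnt2 : 1 ≤ (q.dropUntil x hxq).support.tail.count x := by
        have h3 := q.count_support_takeUntil_eq_one hxq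
        rw [hsupp, List.count_append, h3] at hcnt'
        omega
      have hdpos : 0 < (q.dropUntil x hxq).length := by
        have hxd : x ∈ (q.dropUntil x hxq).support.tail := by
          rw [← List.count_pos_iff]; omega
        have h4 : (q.dropUntil x hxq).support.tail.length = (q.dropUntil x hxq).length := by
          rw [List.length_tail, Walk.length_support]
          omega
        have := List.length_pos_of_mem hxd
        omega
      rcases Nat.even_or_odd (q.dropUntil x hxq).length with hd | hd
      · -- the first closed walk is odd
        have hodd1 : Odd ((q.takeUntil x hxq).length + 1) := by
          rw [Nat.odd_iff] at hodd ⊢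
          rw [Nat.even_iff] at hd
          omega
        exact ih ((q.takeUntil x hxq).length + 1) (by omega)
          (Walk.cons hadj (q.takeUntil x hxq)) rfl hodd1
      · exact ih (q.dropUntil x hxq).length (by omega) (q.dropUntil x hxq) rfl hd

/-- A graph with no odd cycle has an independent set covering half its vertices. -/
lemma exists_half_indep {W : Type*} [Finite W] {G : SimpleGraph W}
    (h : ∀ (u : W) (c : G.Walk u u), c.IsCycle → ¬ Odd c.length) :
    ∃ S : Set W, (∀ ⦃u⦄, u ∈ S → ∀ ⦃v⦄, v ∈ S → ¬ G.Adj u v) ∧ Nat.card W ≤ 2 * S.ncard := by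
  classical
  have hW : ∀ (u : W) (p : G.Walk u u), ¬ Odd p.length := by
    intro u p hp
    obtain ⟨u', c, hc, hodd⟩ := exists_odd_cycle_of_odd_closed_walk p.length p rfl hp
    exact h u' c hc hodd
  set root : W → W := fun v => (G.connectedComponentMk v).out with hroot
  have hreach : ∀ v, G.Reachable (root v) v := by
    intro v
    have h5 : G.connectedComponentMk (root v) = G.connectedComponentMk v :=
      (G.connectedComponentMk v).out_eq
    exact (SimpleGraph.ConnectedComponent.eq).mp h5
  have hradj : ∀ {u v : W}, G.Adj u v → root u = root v := by
    intro u v a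
    exact congrArg Quot.out (SimpleGraph.ConnectedComponent.sound a.reachable)
  have key : ∀ (u v : W) (p : G.Walk (root u) u) (q : G.Walk (root v) v), G.Adj u v →
      ¬ Even (p.length + q.length) := by
    intro u v p q a hev
    have hr : root v = root u := (hradj a).symm
    apply hW (root u) (p.append (Walk.cons a (q.copy hr rfl).reverse))
    have hl : (p.append (Walk.cons a (q.copy hr rfl).reverse)).length
        = p.length + (q.length + 1) := by
      rw [Walk.length_append, Walk.length_cons, Walk.length_reverse, Walk.length_copy]
    rw [hl, Nat.odd_iff]
    rw [Nat.even_iff] at hev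
    omega
  set S₀ : Set W := {v | ∃ p : G.Walk (root v) v, Even p.length} with hS₀
  set S₁ : Set W := {v | ∃ p : G.Walk (root v) v, Odd p.length} with hS₁
  have hcover : (Set.univ : Set W) ⊆ S₀ ∪ S₁ := by
    intro v _
    obtain ⟨p⟩ := hreach v
    rcases Nat.even_or_odd p.length with hp | hp
    · exact Or.inl ⟨p, hp⟩
    · exact Or.inr ⟨p, hp⟩
  have hcard : Nat.card W ≤ S₀.ncard + S₁.ncard := by
    calc Nat.card W = (Set.univ : Set W).ncard := (Set.ncard_univ W).symm
      _ ≤ (S₀ ∪ S₁).ncard := Set.ncard_le_ncard hcover (Set.toFinite _)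
      _ ≤ S₀.ncard + S₁.ncard := Set.ncard_union_le _ _
  have hind₀ : ∀ ⦃u⦄, u ∈ S₀ → ∀ ⦃v⦄, v ∈ S₀ → ¬ G.Adj u v := by
    rintro u ⟨p, hp⟩ v ⟨q, hq⟩ a
    exact key u v p q a (hp.add hq)
  have hind₁ : ∀ ⦃u⦄, u ∈ S₁ → ∀ ⦃v⦄, v ∈ S₁ → ¬ G.Adj u v := by
    rintro u ⟨p, hp⟩ v ⟨q, hq⟩ a
    exact key u v p q a (hp.add_odd hq)
  rcases le_total S₀.ncard S₁.ncard with hcmp | hcmp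
  · exact ⟨S₁, hind₁, by omega⟩
  · exact ⟨S₀, hind₀, by omega⟩

/-- Main counting lemma: every vertex set `P` contains an independent set covering
at least `(|P| - #odd cycles inside P)/2` of it. -/
lemma main_counting (G : SimpleGraph V) :
    ∀ (n : ℕ) (P : Set V), P.ncard = n →
      ∃ S : Set V, S ⊆ P ∧ IsIndep G S ∧
        P.ncard ≤ 2 * S.ncard + {C : Set V | IsOddCycleVertexSet G C ∧ C ⊆ P}.ncard := by
  intro n
  induction n using Nat.strong_induction_on with
  | _ n ih =>
    intro P hP
    by_cases hC : ∃ C : Set V, IsOddCycleVertexSet G C ∧ C ⊆ P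
    · obtain ⟨C, hCcyc, hCP⟩ := hC
      obtain ⟨v0, wk, hcyc, hodd, hsupp⟩ := hCcyc
      have hvC : v0 ∈ C := by
        rw [← hsupp]; exact wk.start_mem_support
      have hvP : v0 ∈ P := hCP hvC
      have hn : 0 < n := by
        rw [← hP]
        exact (Set.ncard_pos (Set.toFinite P)).mpr ⟨v0, hvP⟩
      have hP' : (P \ {v0}).ncard = n - 1 := by
        rw [Set.ncard_diff_singleton_of_mem hvP, hP]
      obtain ⟨S, hSP, hSind, hSb⟩ := ih (n - 1) (by omega) (P \ {v0}) hP'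
      refine ⟨S, hSP.trans Set.diff_subset, hSind, ?_⟩
      have hq : {C' : Set V | IsOddCycleVertexSet G C' ∧ C' ⊆ P \ {v0}}.ncard + 1
          ≤ {C' : Set V | IsOddCycleVertexSet G C' ∧ C' ⊆ P}.ncard := by
        have hss : {C' : Set V | IsOddCycleVertexSet G C' ∧ C' ⊆ P \ {v0}}
            ⊂ {C' : Set V | IsOddCycleVertexSet G C' ∧ C' ⊆ P} := by
          constructor
          · rintro C' ⟨h1, h2⟩
            exact ⟨h1, h2.trans Set.diff_subset⟩
          · intro hsub
            have hmem := hsub ⟨⟨v0, wk, hcyc, hodd, hsupp⟩, hCP⟩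
            exact (hmem.2 hvC).2 rfl
        exact Set.ncard_lt_ncard hss (Set.toFinite _)
      omega
    · push_neg at hC
      have hno : ∀ (u : ↥P) (c : (G.induce P).Walk u u), c.IsCycle → ¬ Odd c.length := by
        intro u c hc hodd
        let f : G.induce P →g G := ⟨Subtype.val, fun {a b} hab => hab⟩
        have hfinj : Function.Injective f := Subtype.val_injective
        have hc' : (c.map f).IsCycle := (Walk.map_isCycle_iff_of_injective hfinj).mpr hc
        have hlen : (c.map f).length = c.length := c.length_map f
        refine hC {x | x ∈ (c.map f).support} ⟨↑u, c.map f, hc', hlen ▸ hodd, rfl⟩ ?_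
        intro x hx
        rw [Set.mem_setOf_eq, Walk.support_map, List.mem_map] at hx
        obtain ⟨y, -, rfl⟩ := hx
        exact y.2
      obtain ⟨S₀, hS₀ind, hS₀card⟩ := exists_half_indep hno
      refine ⟨Subtype.val '' S₀, ?_, ?_, ?_⟩
      · rintro x ⟨y, -, rfl⟩; exact y.2
      · rintro u ⟨a, ha, rfl⟩ v ⟨b, hb, rfl⟩ hadj
        exact hS₀ind ha hb hadj
      · have h1 : (Subtype.val '' S₀).ncard = S₀.ncard :=
          Set.ncard_image_of_injective _ Subtype.val_injective
        have h2 : P.ncard = Nat.card ↥P := (Nat.card_coe_set_eq P).symm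
        omega


/-- For every finite simple graph `G`,
`|corona(G)| + |core(G)| ≤ 2·α(G) + k`, where `k` is the maximum cardinality of a
set of pairwise vertex-distinct odd cycles of `G`. -/
theorem corona_core_le_two_alpha_add_vertexDistinctOddCycles (G : SimpleGraph V) :
    (coronaSet G).ncard + (coreSet G).ncard ≤
      2 * _root_.indepNum G + numVertexDistinctOddCycles G := by
  classical
  have hne : {n : ℕ | ∃ S : Set V, IsIndep G S ∧ S.ncard = n}.Nonempty :=
    ⟨0, ∅, fun u hu => absurd hu (Set.notMem_empty u), Set.ncard_empty V⟩
  have hbdd : BddAbove {n : ℕ | ∃ S : Set V, IsIndep G S ∧ S.ncard = n} := by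
    refine ⟨Nat.card V, ?_⟩
    rintro m ⟨S, -, rfl⟩
    calc S.ncard ≤ (Set.univ : Set V).ncard :=
          Set.ncard_le_ncard (Set.subset_univ S) (Set.toFinite _)
      _ = Nat.card V := Set.ncard_univ V
  have hmem : _root_.indepNum G ∈ {n : ℕ | ∃ S : Set V, IsIndep G S ∧ S.ncard = n} :=
    Nat.sSup_mem hne hbdd
  obtain ⟨Smax, hSmaxInd, hSmaxCard⟩ := hmem
  have hle : ∀ T : Set V, IsIndep G T → T.ncard ≤ _root_.indepNum G := fun T hT =>
    le_csSup hbdd ⟨T, hT, rfl⟩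
  have hSmaxMax : IsMaxIndep G Smax :=
    ⟨hSmaxInd, fun T hT => by rw [hSmaxCard]; exact hle T hT⟩
  have hcoreSub : coreSet G ⊆ Smax := Set.sInter_subset_of_mem hSmaxMax
  have hSmaxCor : Smax ⊆ coronaSet G := Set.subset_sUnion_of_mem hSmaxMax
  have hcc : coreSet G ⊆ coronaSet G := hcoreSub.trans hSmaxCor
  have hnoedge : ∀ u ∈ coronaSet G, ∀ v ∈ coreSet G, ¬ G.Adj u v := by
    rintro u ⟨T, hT, huT⟩ v hv
    exact hT.1 huT (hv T hT)
  obtain ⟨S, hSP, hSind, hSb⟩ :=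
    main_counting G ((coronaSet G \ coreSet G).ncard) (coronaSet G \ coreSet G) rfl
  have hTind : IsIndep G (S ∪ coreSet G) := by
    intro u hu v hv hadj
    rcases hu with hu | hu <;> rcases hv with hv | hv
    · exact hSind hu hv hadj
    · exact hnoedge u (hSP hu).1 v hv hadj
    · exact hnoedge v (hSP hv).1 u hu hadj.symm
    · exact hSmaxInd (hcoreSub hu) (hcoreSub hv) hadj
  have hdisj : Disjoint S (coreSet G) := by
    rw [Set.disjoint_left]
    intro a ha hacore
    exact (hSP ha).2 hacore
  have hTcard : (S ∪ coreSet G).ncard = S.ncard + (coreSet G).ncard :=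
    Set.ncard_union_eq hdisj (Set.toFinite _) (Set.toFinite _)
  have hTle : S.ncard + (coreSet G).ncard ≤ _root_.indepNum G := by
    rw [← hTcard]; exact hle _ hTind
  have hqle : {C : Set V | IsOddCycleVertexSet G C ∧ C ⊆ coronaSet G \ coreSet G}.ncard
      ≤ numVertexDistinctOddCycles G :=
    Set.ncard_le_ncard (fun C hC => hC.1) (Set.toFinite _)
  have hsplit : (coronaSet G \ coreSet G).ncard + (coreSet G).ncard = (coronaSet G).ncard :=
    Set.ncard_diff_add_ncard_of_subset hcc (Set.toFinite _)
  omega
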